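/- Let X be a complex Banach space and let (a_n)_{n≥1} be a sequence in X. If for every continuous linear functional x' ∈ X' there exists s ∈ ℂ such that the scalar series Σ_n x'(a_n) n^{−s} converges, then there exists s ∈ ℂ such that the series Σ_n a_n n^{−s} converges in the norm of X. -/

import Mathlib

open Filter Finset Topology

/-- Abel summation: if the partial sums of `g` are bounded in norm, then the series
`∑ (n+1)^(-2) • g n` converges. -/
lemma abel_aux {X : Type*} [NormedAddCommGroup X] [NormedSpace ℂ X] [CompleteSpace X]
    (g : ℕ → X) (M : ℝ) (hM : ∀ N, ‖∑ n ∈ Finset.range N, g n‖ ≤ M) :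
    ∃ L : X, Tendsto (fun N : ℕ => ∑ n ∈ Finset.range N, (((n + 1 : ℕ) : ℂ) ^ (-2 : ℂ)) • g n)
      atTop (𝓝 L) := by
  have hM0 : 0 ≤ M := le_trans (norm_nonneg _) (hM 0)
  set G : ℕ → X := fun N => ∑ n ∈ Finset.range N, g n with hG
  set w : ℕ → ℝ := fun i => ((i + 1 : ℕ) : ℝ) ^ (-2 : ℝ) with hw
  set f : ℕ → ℂ := fun i => ((i + 1 : ℕ) : ℂ) ^ (-2 : ℂ) with hf
  have hfw : ∀ i, f i = ((w i : ℝ) : ℂ) := by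
    intro i
    have h0 : (0 : ℝ) ≤ ((i + 1 : ℕ) : ℝ) := by positivity
    rw [hf, hw]
    simp only
    rw [Complex.ofReal_cpow h0]
    push_cast
    ring_nf
  have hwpos : ∀ i, 0 < w i := by
    intro i
    rw [hw]
    have : (0 : ℝ) < ((i + 1 : ℕ) : ℝ) := by positivity
    positivity
  have hanti : ∀ i, w (i + 1) ≤ w i := by
    intro i
    rw [hw]
    simp only
    rw [Real.rpow_neg (by positivity), Real.rpow_neg (by positivity)]
    rw [inv_le_inv₀ (by positivity) (by positivity)]
    apply Real.rpow_le_rpow (by positivity) (by push_cast; linarith) (by norm_num)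
  have hw0 : Tendsto w atTop (𝓝 0) := by
    have h1 : Tendsto (fun i : ℕ => ((i + 1 : ℕ) : ℝ)) atTop atTop := by
      apply tendsto_natCast_atTop_atTop.comp (tendsto_add_atTop_nat 1)
    exact (tendsto_rpow_neg_atTop (by norm_num : (0:ℝ) < 2)).comp h1
  set v : ℕ → X := fun i => (f (i + 1) - f i) • G (i + 1) with hv
  have hvnorm : ∀ i, ‖v i‖ ≤ (w i - w (i + 1)) * M := by
    intro i
    rw [hv]
    simp only
    rw [norm_smul, hfw, hfw, ← Complex.ofReal_sub, Complex.norm_real, Real.norm_eq_abs,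
      abs_of_nonpos (by linarith [hanti i])]
    have := hM (i + 1)
    have h1 : 0 ≤ w i - w (i + 1) := by linarith [hanti i]
    calc -(w (i + 1) - w i) * ‖G (i + 1)‖ = (w i - w (i + 1)) * ‖G (i + 1)‖ := by ring
      _ ≤ (w i - w (i + 1)) * M := by
          exact mul_le_mul_of_nonneg_left this h1
  have husum : Summable (fun i => (w i - w (i + 1)) * M) := by
    apply summable_of_sum_range_le (c := w 0 * M)
    · intro i
      exact mul_nonneg (by linarith [hanti i]) hM0
    · intro n
      have : ∑ i ∈ Finset.range n, (w i - w (i + 1)) * M = (w 0 - w n) * M := by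
        rw [← Finset.sum_mul, Finset.sum_range_sub' w n]
      rw [this]
      have := (hwpos n).le
      nlinarith
  have hvsum : Summable v := by
    apply Summable.of_norm_bounded husum hvnorm
  have h1 : Tendsto (fun N : ℕ => ∑ i ∈ Finset.range (N - 1), v i) atTop (𝓝 (∑' i, v i)) :=
    hvsum.hasSum.tendsto_sum_nat.comp (tendsto_sub_atTop_nat 1)
  have h2 : Tendsto (fun N : ℕ => f (N - 1) • G N) atTop (𝓝 0) := by
    have hgz : Tendsto (fun N : ℕ => w (N - 1) * M) atTop (𝓝 0) := by
      have h3 : Tendsto (fun N : ℕ => w (N - 1)) atTop (𝓝 0) :=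
        hw0.comp (tendsto_sub_atTop_nat 1)
      simpa using h3.mul_const M
    refine squeeze_zero_norm (fun N => ?_) hgz
    rw [norm_smul, hfw, Complex.norm_real, Real.norm_eq_abs, abs_of_pos (hwpos _)]
    exact mul_le_mul_of_nonneg_left (hM N) (hwpos _).le
  refine ⟨0 - ∑' i, v i, ?_⟩
  have := h2.sub h1
  apply this.congr
  intro N
  rw [← Finset.sum_range_by_parts f g N]

/-- In a complex Banach space, if each scalar Dirichlet series `∑ₙ x'(aₙ) n^{-s}`
converges somewhere, then the vector-valued Dirichlet series converges somewhere in norm. -/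
theorem dirichlet_finite_abscissa_of_weak_banach
    {X : Type*} [NormedAddCommGroup X] [NormedSpace ℂ X] [CompleteSpace X]
    (a : ℕ → X)
    (h : ∀ x' : X →L[ℂ] ℂ, ∃ s : ℂ, ∃ L : ℂ, Tendsto
      (fun N : ℕ => ∑ n ∈ Finset.range N, (((n + 1 : ℕ) : ℂ) ^ (-s)) * x' (a (n + 1)))
      atTop (𝓝 L)) :
    ∃ s : ℂ, ∃ L : X, Tendsto
      (fun N : ℕ => ∑ n ∈ Finset.range N, (((n + 1 : ℕ) : ℂ) ^ (-s)) • a (n + 1))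
      atTop (𝓝 L) := by
  classical
  set c : ℕ → ℕ → ℂ := fun k n => ((n + 1 : ℕ) : ℂ) ^ (-(k : ℂ)) with hc
  have hnormc : ∀ k n : ℕ, ‖c k n‖ = ((n + 1 : ℕ) : ℝ) ^ (-(k : ℝ)) := by
    intro k n
    have hb : (0 : ℝ) < ((n + 1 : ℕ) : ℝ) := by positivity
    rw [hc]
    simp only
    rw [show ((n + 1 : ℕ) : ℂ) = (((n + 1 : ℕ) : ℝ) : ℂ) by push_cast; ring,
      Complex.norm_cpow_eq_rpow_re_of_pos hb]
    simp
  set A : ℕ → Set (X →L[ℂ] ℂ) := fun k =>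
    {x' | ∀ N : ℕ, ‖∑ n ∈ Finset.range N, c k n * x' (a (n + 1))‖ ≤ (k : ℝ)} with hA
  -- each A k is closed
  have hclosed : ∀ k, IsClosed (A k) := by
    intro k
    have : A k = ⋂ N : ℕ,
        {x' : X →L[ℂ] ℂ | ‖∑ n ∈ Finset.range N, c k n * x' (a (n + 1))‖ ≤ (k : ℝ)} := by
      ext x'; simp [hA, Set.mem_iInter]
    rw [this]
    refine isClosed_iInter fun N => isClosed_le ?_ continuous_const
    apply Continuous.norm
    apply continuous_finset_sum
    intro n _
    exact continuous_const.mul ((ContinuousLinearMap.apply ℂ ℂ (a (n + 1))).continuous)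
  -- the A k cover the dual
  have hcover : ∀ x' : X →L[ℂ] ℂ, ∃ k : ℕ, x' ∈ A k := by
    intro x'
    obtain ⟨s, L, hsl⟩ := h x'
    have hterm : Tendsto (fun n : ℕ => (((n + 1 : ℕ) : ℂ) ^ (-s)) * x' (a (n + 1)))
        atTop (𝓝 0) := by
      have h1 := (hsl.comp (tendsto_add_atTop_nat 1)).sub hsl
      rw [sub_self] at h1
      apply h1.congr
      intro n
      simp [Finset.sum_range_succ]
    obtain ⟨C₀, hC₀⟩ : ∃ C₀ : ℝ, ∀ n : ℕ,
        ‖(((n + 1 : ℕ) : ℂ) ^ (-s)) * x' (a (n + 1))‖ ≤ C₀ := by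
      obtain ⟨C₀, hC₀⟩ := hterm.norm.bddAbove_range
      exact ⟨C₀, fun n => hC₀ ⟨n, rfl⟩⟩
    set C : ℝ := max C₀ 1 with hCdef
    have hCpos : (0 : ℝ) < C := lt_of_lt_of_le one_pos (le_max_right _ _)
    have hbound : ∀ n : ℕ, ‖x' (a (n + 1))‖ ≤ C * ((n + 1 : ℕ) : ℝ) ^ s.re := by
      intro n
      have hb : (0 : ℝ) < ((n + 1 : ℕ) : ℝ) := by positivity
      have hnorm : ‖((n + 1 : ℕ) : ℂ) ^ (-s)‖ = ((n + 1 : ℕ) : ℝ) ^ (-s.re) := by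
        rw [show ((n + 1 : ℕ) : ℂ) = (((n + 1 : ℕ) : ℝ) : ℂ) by push_cast; ring,
          Complex.norm_cpow_eq_rpow_re_of_pos hb]
        simp
      have h2 : ((n + 1 : ℕ) : ℝ) ^ (-s.re) * ‖x' (a (n + 1))‖ ≤ C := by
        calc ((n + 1 : ℕ) : ℝ) ^ (-s.re) * ‖x' (a (n + 1))‖
            = ‖(((n + 1 : ℕ) : ℂ) ^ (-s)) * x' (a (n + 1))‖ := by rw [norm_mul, hnorm]
          _ ≤ C₀ := hC₀ n
          _ ≤ C := le_max_left _ _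
      have h3 := mul_le_mul_of_nonneg_left h2 (Real.rpow_nonneg hb.le s.re)
      rw [← mul_assoc, ← Real.rpow_add hb] at h3
      simp only [add_neg_cancel, Real.rpow_zero, one_mul] at h3
      linarith [h3]
    set m : ℕ := ⌈s.re⌉₊ + 2 with hmdef
    have hm : s.re + 2 ≤ (m : ℝ) := by
      rw [hmdef]; push_cast; linarith [Nat.le_ceil s.re]
    have hsummand : ∀ k : ℕ, m ≤ k → ∀ n : ℕ,
        ‖c k n * x' (a (n + 1))‖ ≤ C * ((n + 1 : ℕ) : ℝ) ^ (-2 : ℝ) := by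
      intro k hk n
      have hb : (0 : ℝ) < ((n + 1 : ℕ) : ℝ) := by positivity
      have h1 : (1 : ℝ) ≤ ((n + 1 : ℕ) : ℝ) := by push_cast; linarith
      rw [norm_mul, hnormc]
      calc ((n + 1 : ℕ) : ℝ) ^ (-(k : ℝ)) * ‖x' (a (n + 1))‖
          ≤ ((n + 1 : ℕ) : ℝ) ^ (-(k : ℝ)) * (C * ((n + 1 : ℕ) : ℝ) ^ s.re) :=
            mul_le_mul_of_nonneg_left (hbound n) (Real.rpow_nonneg hb.le _)
        _ = C * ((n + 1 : ℕ) : ℝ) ^ (s.re + -(k : ℝ)) := by rw [Real.rpow_add hb]; ring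
        _ ≤ C * ((n + 1 : ℕ) : ℝ) ^ (-2 : ℝ) := by
            have hmk : (m : ℝ) ≤ (k : ℝ) := Nat.cast_le.mpr hk
            have : s.re + -(k : ℝ) ≤ -2 := by linarith
            exact mul_le_mul_of_nonneg_left
              (Real.rpow_le_rpow_of_exponent_le h1 this) hCpos.le
    have hs2 : Summable (fun n : ℕ => ((n + 1 : ℕ) : ℝ) ^ (-2 : ℝ)) := by
      have h0 : Summable (fun n : ℕ => (n : ℝ) ^ (-2 : ℝ)) :=
        Real.summable_nat_rpow.mpr (by norm_num)
      exact_mod_cast (summable_nat_add_iff 1).mpr h0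
    set B : ℝ := C * ∑' n : ℕ, ((n + 1 : ℕ) : ℝ) ^ (-2 : ℝ) with hBdef
    refine ⟨max m ⌈B⌉₊, fun N => ?_⟩
    calc ‖∑ n ∈ Finset.range N, c (max m ⌈B⌉₊) n * x' (a (n + 1))‖
        ≤ ∑ n ∈ Finset.range N, ‖c (max m ⌈B⌉₊) n * x' (a (n + 1))‖ := norm_sum_le _ _
      _ ≤ ∑ n ∈ Finset.range N, C * ((n + 1 : ℕ) : ℝ) ^ (-2 : ℝ) :=
          Finset.sum_le_sum fun n _ => hsummand _ (le_max_left _ _) n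
      _ = C * ∑ n ∈ Finset.range N, ((n + 1 : ℕ) : ℝ) ^ (-2 : ℝ) := by
          rw [Finset.mul_sum]
      _ ≤ B := by
          refine mul_le_mul_of_nonneg_left ?_ hCpos.le
          exact hs2.sum_le_tsum _ (fun n _ => Real.rpow_nonneg (by positivity) _)
      _ ≤ (⌈B⌉₊ : ℝ) := Nat.le_ceil B
      _ ≤ ((max m ⌈B⌉₊ : ℕ) : ℝ) := Nat.cast_le.mpr (le_max_right _ _)
  -- Baire category
  haveI : BaireSpace (X →L[ℂ] ℂ) := inferInstance
  obtain ⟨k, x₀, hx₀⟩ : ∃ k : ℕ, ∃ x₀, x₀ ∈ interior (A k) := by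
    obtain ⟨k, hk⟩ := nonempty_interior_of_iUnion_of_closed hclosed
      (Set.eq_univ_of_forall fun x' => Set.mem_iUnion.mpr (hcover x'))
    exact ⟨k, hk⟩
  obtain ⟨ε, hεpos, hball⟩ : ∃ ε > 0, Metric.ball x₀ ε ⊆ A k := by
    rcases Metric.mem_nhds_iff.mp (mem_interior_iff_mem_nhds.mp hx₀) with ⟨ε, hε, hb⟩
    exact ⟨ε, hε, hb⟩
  have hx₀mem : x₀ ∈ A k := interior_subset hx₀
  -- uniform bound on the dual
  have key : ∀ (N : ℕ) (fd : X →L[ℂ] ℂ),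
      ‖∑ n ∈ Finset.range N, c k n * fd (a (n + 1))‖ ≤ (4 * k / ε) * ‖fd‖ := by
    intro N fd
    rcases eq_or_ne fd 0 with rfl | hfd
    · simp
    · have hnf : 0 < ‖fd‖ := norm_pos_iff.mpr hfd
      set t : ℂ := ((ε / (2 * ‖fd‖) : ℝ) : ℂ) with ht
      have htn : ‖t‖ = ε / (2 * ‖fd‖) := by
        rw [ht, Complex.norm_real, Real.norm_eq_abs, abs_of_pos (by positivity)]
      have hg : x₀ + t • fd ∈ Metric.ball x₀ ε := by
        rw [Metric.mem_ball, dist_eq_norm]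
        simp only [add_sub_cancel_left]
        rw [norm_smul t fd, htn, div_mul_eq_mul_div, div_lt_iff₀ (by positivity)]
        nlinarith
      have h1 := hball hg N
      have h0 := hx₀mem N
      have hlin : ∑ n ∈ Finset.range N, c k n * ((x₀ + t • fd) (a (n + 1)))
          - ∑ n ∈ Finset.range N, c k n * (x₀ (a (n + 1)))
          = t * ∑ n ∈ Finset.range N, c k n * fd (a (n + 1)) := by
        rw [← Finset.sum_sub_distrib, Finset.mul_sum]
        refine Finset.sum_congr rfl fun n _ => ?_
        simp only [ContinuousLinearMap.add_apply, ContinuousLinearMap.coe_smul',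
          Pi.smul_apply, smul_eq_mul]
        ring
      have h2 : ‖t * ∑ n ∈ Finset.range N, c k n * fd (a (n + 1))‖ ≤ 2 * k := by
        rw [← hlin]
        calc ‖_ - _‖ ≤ ‖_‖ + ‖_‖ := norm_sub_le _ _
          _ ≤ 2 * k := by linarith
      rw [norm_mul, htn, div_mul_eq_mul_div, div_le_iff₀ (by positivity)] at h2
      rw [div_mul_eq_mul_div, le_div_iff₀ hεpos]
      nlinarith
  -- norm bound on the vector partial sums
  have hT : ∀ N : ℕ, ‖∑ n ∈ Finset.range N, c k n • a (n + 1)‖ ≤ 4 * k / ε := by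
    intro N
    refine NormedSpace.norm_le_dual_bound ℂ _ (by positivity) fun fd => ?_
    have heq : fd (∑ n ∈ Finset.range N, c k n • a (n + 1))
        = ∑ n ∈ Finset.range N, c k n * fd (a (n + 1)) := by
      rw [map_sum]
      exact Finset.sum_congr rfl fun n _ => by rw [map_smul, smul_eq_mul]
    rw [heq]
    exact key N fd
  -- Abel summation
  obtain ⟨L, hL⟩ := abel_aux (fun n => c k n • a (n + 1)) (4 * k / ε) hT
  refine ⟨(k : ℂ) + 2, L, ?_⟩
  apply hL.congr
  intro N
  refine Finset.sum_congr rfl fun n _ => ?_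
  rw [smul_smul]
  congr 1
  have hne : ((n + 1 : ℕ) : ℂ) ≠ 0 := Nat.cast_ne_zero.mpr (Nat.succ_ne_zero n)
  rw [hc]
  simp only
  rw [← Complex.cpow_add _ _ hne]
  ring_nf
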